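/- arXiv:2102.07570 — 5 statements merged into one kernel-verified Lean document; each statement's English description precedes it below -/
import Mathlib

section
/- Fix an integer m ≥ 1 and a real δ > −m, and consider the preferential attachment model without self-loops with parameters m and δ. Then for all s ≥ 2, all i ∈ {0,…,m−1}, and all j ≥ m, almost surely E[N_j(s,i+1) | F_{s,i}] = N_j(s,i)·(1 − (j+δ)/(s(2m+δ) − 2m + i)) + 1{j ≠ m}·((j−1+δ)/(s(2m+δ) − 2m + i))·N_{j−1}(s,i) + 1{j = m}·1{i+1 = m}. -/
open MeasureTheory Filter Finset

noncomputable section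

/-- The coefficients `b_j^{(k)} = (-1)^{k-j} Γ(k+δ)/((k-j)! Γ(j+δ))`, with `b_j^{(k)} = 0`
for `j > k`. -/
def bcoef (δ : ℝ) (j k : ℕ) : ℝ :=
  if j ≤ k then
    (-1 : ℝ)^(k-j) * Real.Gamma ((k:ℝ)+δ) / ((Nat.factorial (k-j) : ℝ) * Real.Gamma ((j:ℝ)+δ))
  else 0

/-- The limiting degree distribution `p_k`. -/
def pk (m : ℕ) (δ : ℝ) (k : ℕ) : ℝ :=
  (2 + δ/m) * Real.Gamma ((k:ℝ)+δ) * Real.Gamma ((m:ℝ)+2+δ+δ/m) /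
    (Real.Gamma ((m:ℝ)+δ) * Real.Gamma ((k:ℝ)+3+δ+δ/m))

/-- The normalizing coefficients `a_{s,i}^{(k)}`. -/
def acoef (m : ℕ) (δ : ℝ) (k s i : ℕ) : ℝ :=
  (∏ t ∈ Finset.Icc (k-m+1) (s-1), ∏ r ∈ Finset.range m,
      (1 - ((k:ℝ)+δ)/((t:ℝ)*(2*m+δ) - 2*m + r)))⁻¹ *
  (∏ r ∈ Finset.range i, (1 - ((k:ℝ)+δ)/((s:ℝ)*(2*m+δ) - 2*m + r)))⁻¹

/-- The preferential attachment model without self-loops, with parameters `m ≥ 1` and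
`δ > -m`.  `PA_1` consists of vertices `0, 1` joined by `m` edges; at each step `s ≥ 2` a
new vertex `s` attaches `m` edges one by one, choosing the endpoint of the `i`-th edge
with probability proportional to degree plus `δ`.  `N k s i` is the number of vertices of
degree `k` after the `i`-th edge at time `s` (excluding vertex `s`), `D s i` the degree of
the vertex receiving the `i`-th edge at time `s`, and `F s i` the σ-algebra generated by
the construction up to that point. -/
structure PAModel (m : ℕ) (δ : ℝ) (Ω : Type) [MeasurableSpace Ω] where
  μ : Measure Ω
  isProb : IsProbabilityMeasure μ
  F : ℕ → ℕ → MeasurableSpace Ω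
  F_le : ∀ s i, F s i ≤ ‹MeasurableSpace Ω›
  F_mono : ∀ s i s' i', s < s' ∨ (s = s' ∧ i ≤ i') → F s i ≤ F s' i'
  N : ℕ → ℕ → ℕ → Ω → ℝ
  D : ℕ → ℕ → Ω → ℕ
  N_boundary : ∀ k s, N k (s+1) 0 = N k s m
  N_init : ∀ k, N k 2 0 = fun _ => if k = m then 2 else 0
  N_adapted : ∀ k s i, Measurable[F s i] (N k s i)
  D_adapted : ∀ s i, 1 ≤ i → Measurable[F s i] (D s i)
  N_integrable : ∀ k s i, Integrable (N k s i) μ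
  N_rec : ∀ k s i, 2 ≤ s → i < m → 1 ≤ k → ∀ ω,
    N k s (i+1) ω = N k s i ω - (if D s (i+1) ω = k then 1 else 0)
      + (if k = m ∧ i + 1 = m then 1 else 0)
      + (if k ≠ m ∧ D s (i+1) ω = k - 1 then 1 else 0)
  attach_law : ∀ s i k, 2 ≤ s → 1 ≤ i → i ≤ m →
    MeasureTheory.condExp (F s (i-1)) μ
        (Set.indicator {ω | D s i ω = k} (fun _ => (1:ℝ)))
      =ᵐ[μ] fun ω => ((k:ℝ) + δ) * N k s (i-1) ω / ((s:ℝ)*(2*m+δ) - 2*m + i - 1)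

/-- One-step conditional expectation of the degree counts:
`E[N_j(s,i+1) | F_{s,i}] = N_j(s,i)(1 - (j+δ)/(s(2m+δ)-2m+i))
  + 1_{j≠m} ((j-1+δ)/(s(2m+δ)-2m+i)) N_{j-1}(s,i) + 1_{j=m} 1_{i+1=m}`. -/
theorem condexp_degree_count (m : ℕ) (hm : 1 ≤ m) (δ : ℝ) (hδ : -(m:ℝ) < δ)
    {Ω : Type} [MeasurableSpace Ω] (P : PAModel m δ Ω)
    (s i j : ℕ) (hs : 2 ≤ s) (hi : i < m) (hj : m ≤ j) :
    MeasureTheory.condExp (P.F s i) P.μ (P.N j s (i+1)) =ᵐ[P.μ]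
      fun ω => P.N j s i ω * (1 - ((j:ℝ)+δ)/((s:ℝ)*(2*(m:ℝ)+δ) - 2*m + i))
        + (if j ≠ m then 1 else 0) *
            (((j:ℝ) - 1 + δ)/((s:ℝ)*(2*(m:ℝ)+δ) - 2*m + i)) * P.N (j-1) s i ω
        + (if j = m ∧ i + 1 = m then 1 else 0) := by
  classical
  haveI : IsProbabilityMeasure P.μ := P.isProb
  have hj1 : 1 ≤ j := le_trans hm hj
  set c : ℝ := (s:ℝ)*(2*(m:ℝ)+δ) - 2*m + i with hc
  set f1 : Ω → ℝ := P.N j s i with hf1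
  set A1 : Set Ω := {ω | P.D s (i+1) ω = j} with hA1
  set A2 : Set Ω := {ω | P.D s (i+1) ω = j-1} with hA2
  set f2 : Ω → ℝ := Set.indicator A1 (fun _ => (1:ℝ)) with hf2
  set f4 : Ω → ℝ := Set.indicator A2 (fun _ => (1:ℝ)) with hf4
  set κ : ℝ := (if j = m ∧ i+1 = m then (1:ℝ) else 0) with hκ
  set c3 : ℝ := (if j ≠ m then (1:ℝ) else 0) with hc3
  -- measurability of D and the sets
  have hD : Measurable (P.D s (i+1)) :=
    (P.D_adapted s (i+1) (by omega)).mono (P.F_le s (i+1)) le_rfl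
  have hA1m : MeasurableSet A1 := hD (measurableSet_singleton j)
  have hA2m : MeasurableSet A2 := hD (measurableSet_singleton (j-1))
  have hf2i : Integrable f2 P.μ := (integrable_const (1:ℝ)).indicator hA1m
  have hf4i : Integrable f4 P.μ := (integrable_const (1:ℝ)).indicator hA2m
  have hf1i : Integrable f1 P.μ := P.N_integrable j s i
  -- decomposition from the recursion
  have heq : P.N j s (i+1) = (f1 - f2 + fun _ => κ) + c3 • f4 := by
    funext ω
    have := P.N_rec j s i hs hi hj1 ω
    simp only [Pi.add_apply, Pi.sub_apply, Pi.smul_apply, smul_eq_mul, hf2, hf4,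
      Set.indicator_apply, hA1, hA2, Set.mem_setOf_eq, hκ, hc3]
    rw [this]
    by_cases h : j = m <;> by_cases h' : P.D s (i+1) ω = j - 1 <;> simp [hf1, h, h']
  -- attach laws
  have h1 : MeasureTheory.condExp (P.F s i) P.μ f2 =ᵐ[P.μ]
      fun ω => ((j:ℝ) + δ) * P.N j s i ω / c := by
    have h := P.attach_law s (i+1) j hs (by omega) (by omega)
    simp only [Nat.add_sub_cancel] at h
    refine h.trans (Filter.EventuallyEq.of_eq ?_)
    funext ω; rw [hc]; push_cast; ring_nf
  have h2 : MeasureTheory.condExp (P.F s i) P.μ f4 =ᵐ[P.μ]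
      fun ω => ((j:ℝ) - 1 + δ) * P.N (j-1) s i ω / c := by
    have h := P.attach_law s (i+1) (j-1) hs (by omega) (by omega)
    have hcast : ((j-1 : ℕ) : ℝ) = (j:ℝ) - 1 := by
      push_cast [hj1]; ring
    simp only [Nat.add_sub_cancel, hcast] at h
    refine h.trans (Filter.EventuallyEq.of_eq ?_)
    funext ω; rw [hc]; push_cast; ring_nf
  have hcf1 : MeasureTheory.condExp (P.F s i) P.μ f1 = f1 :=
    MeasureTheory.condExp_of_stronglyMeasurable (P.F_le s i)
      (Measurable.stronglyMeasurable (P.N_adapted j s i)) hf1i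
  rw [heq]
  have step1 := MeasureTheory.condExp_add (μ := P.μ) (m := P.F s i)
    (((hf1i.sub hf2i).add (integrable_const κ))) (hf4i.smul c3)
  have step2 := MeasureTheory.condExp_add (μ := P.μ) (m := P.F s i)
    (hf1i.sub hf2i) (integrable_const κ)
  have step3 := MeasureTheory.condExp_sub (μ := P.μ) (m := P.F s i) hf1i hf2i
  have step4 := MeasureTheory.condExp_smul (μ := P.μ) (m := P.F s i) c3 f4
  have hconst : MeasureTheory.condExp (P.F s i) P.μ (fun _ => κ) = fun _ => κ :=
    MeasureTheory.condExp_const (P.F_le s i) κ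
  refine step1.trans ?_
  rw [hconst] at step2
  have := step2.add step4
  refine this.trans ?_
  filter_upwards [step3, h1, h2] with ω h3 hh1 hh2
  simp only [Pi.add_apply, Pi.sub_apply, Pi.smul_apply, smul_eq_mul] at h3 ⊢
  rw [h3, hcf1, hh1, hh2]
  simp only [hκ, hc3]
  split_ifs <;> ring

end
end

section
/- Fix an integer m ≥ 1, a real δ > −m, and an integer k ≥ m. For s ≥ 2, i ∈ {0,…,m−1}, set D := s(2m+δ) − 2m + i. Then the coefficients a_{s,i}^{(k)} and b_j^{(k)} satisfy: (i) for every j with m ≤ j ≤ k−1, a_{s,i+1}^{(k)}·[ b_j^{(k)}·(1 − (j+δ)/D) + b_{j+1}^{(k)}·(j+δ)/D ] = a_{s,i}^{(k)}·b_j^{(k)}; and (ii) a_{s,i+1}^{(k)}·b_k^{(k)}·(1 − (k+δ)/D) = a_{s,i}^{(k)}·b_k^{(k)}. -/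
open MeasureTheory Filter Finset

noncomputable section

/-- The coefficients `a_{s,i}^{(k)}`, `b_j^{(k)}` satisfy the defining recursion
(conditions (condizioni)) whenever all the involved factors are nonzero. -/
theorem acoef_bcoef_recursion (m : ℕ) (hm : 1 ≤ m) (δ : ℝ) (hδ : -(m:ℝ) < δ)
    (k : ℕ) (hk : m ≤ k) (s i : ℕ) (hs : 2 ≤ s) (hi : i < m)
    (hfac : ∀ t ∈ Finset.Icc (k - m + 1) (s - 1), ∀ r ∈ Finset.range m,
      (1 - ((k:ℝ) + δ) / ((t:ℝ)*(2*m+δ) - 2*m + r)) ≠ 0)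
    (hfac' : ∀ r ∈ Finset.range (i + 1),
      (1 - ((k:ℝ) + δ) / ((s:ℝ)*(2*m+δ) - 2*m + r)) ≠ 0)
    (hD : ((s:ℝ)*(2*m+δ) - 2*m + i) ≠ 0) :
    (∀ j : ℕ, m ≤ j → j + 1 ≤ k →
      acoef m δ k s (i+1) *
        (bcoef δ j k * (1 - ((j:ℝ) + δ) / ((s:ℝ)*(2*m+δ) - 2*m + i))
          + bcoef δ (j+1) k * (((j:ℝ) + δ) / ((s:ℝ)*(2*m+δ) - 2*m + i)))
      = acoef m δ k s i * bcoef δ j k) ∧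
    acoef m δ k s (i+1) * bcoef δ k k * (1 - ((k:ℝ) + δ) / ((s:ℝ)*(2*m+δ) - 2*m + i))
      = acoef m δ k s i * bcoef δ k k := by
  have hF : (1 - ((k:ℝ)+δ)/((s:ℝ)*(2*m+δ) - 2*m + i)) ≠ 0 :=
    hfac' i (Finset.self_mem_range_succ i)
  have ha : acoef m δ k s (i+1)
      = acoef m δ k s i * (1 - ((k:ℝ)+δ)/((s:ℝ)*(2*m+δ) - 2*m + i))⁻¹ := by
    unfold acoef
    rw [Finset.prod_range_succ, mul_inv]
    ring
  have hDk : ((s:ℝ)*(2*m+δ) - 2*m + i) - ((k:ℝ)+δ) ≠ 0 := by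
    intro h
    apply hF
    have : ((k:ℝ)+δ)/((s:ℝ)*(2*m+δ) - 2*m + i) = 1 := by
      rw [div_eq_one_iff_eq hD]; linarith
    rw [this]; ring
  constructor
  · intro j hmj hjk
    have hjδ : (0:ℝ) < (j:ℝ) + δ := by
      have : (m:ℝ) ≤ j := by exact_mod_cast hmj
      linarith
    have hΓ : Real.Gamma ((j:ℝ)+δ) ≠ 0 := ne_of_gt (Real.Gamma_pos_of_pos hjδ)
    have hb : bcoef δ (j+1) k * ((j:ℝ)+δ) = ((j:ℝ) - k) * bcoef δ j k := by
      obtain ⟨n, rfl⟩ : ∃ n, k = j+1+n := ⟨k-(j+1), by omega⟩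
      unfold bcoef
      rw [if_pos (by omega), if_pos (by omega)]
      have e1 : j+1+n-(j+1) = n := by omega
      have e2 : j+1+n-j = n+1 := by omega
      rw [e1, e2]
      have hΓ1 : Real.Gamma ((↑(j+1):ℝ)+δ) = ((j:ℝ)+δ) * Real.Gamma ((j:ℝ)+δ) := by
        have h := Real.Gamma_add_one (ne_of_gt hjδ)
        push_cast
        rw [show (j:ℝ)+1+δ = ((j:ℝ)+δ)+1 by ring, h]
      rw [hΓ1, Nat.factorial_succ, pow_succ]
      have hfn : ((n.factorial : ℝ)) ≠ 0 := by exact_mod_cast n.factorial_ne_zero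
      push_cast
      field_simp
      ring
    rw [ha]
    have key : bcoef δ j k * (1 - ((j:ℝ) + δ) / ((s:ℝ)*(2*m+δ) - 2*m + i))
          + bcoef δ (j+1) k * (((j:ℝ) + δ) / ((s:ℝ)*(2*m+δ) - 2*m + i))
        = bcoef δ j k * (1 - ((k:ℝ)+δ)/((s:ℝ)*(2*m+δ) - 2*m + i)) := by
      field_simp
      linear_combination hb
    rw [key]
    field_simp [hDk]
  · rw [ha]
    field_simp [hDk]

end
end

section
/- Fix an integer m ≥ 1 and a real δ > −m, and define p_k := (2 + δ/m)·Γ(k+δ)·Γ(m+2+δ+δ/m) / (Γ(m+δ)·Γ(k+3+δ+δ/m)) for integers k ≥ m. Then p_k > 0 for all k ≥ m and Σ_{k=m}^{∞} p_k = 1; i.e., (p_k)_{k≥m} is a probability mass function. -/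
open MeasureTheory Filter Finset

noncomputable section

/-- `(p_k)_{k ≥ m}` is a probability mass function: each `p_k` is positive and they sum
to one. -/
theorem pk_is_pmf (m : ℕ) (hm : 1 ≤ m) (δ : ℝ) (hδ : -(m:ℝ) < δ) :
    (∀ k : ℕ, m ≤ k → 0 < pk m δ k) ∧
    HasSum (fun n : ℕ => pk m δ (m + n)) 1 := by
  have hmpos : (0:ℝ) < m := by exact_mod_cast hm
  set c := δ/m with hc
  have hcm : -1 < c := by
    rw [hc, lt_div_iff₀ hmpos]; linarith
  have hmd : (0:ℝ) < (m:ℝ) + δ := by linarith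
  have hGmd : 0 < Real.Gamma ((m:ℝ)+δ) := Real.Gamma_pos_of_pos hmd
  have hGm2 : 0 < Real.Gamma ((m:ℝ)+2+δ+c) := Real.Gamma_pos_of_pos (by linarith)
  -- positivity
  have hpos : ∀ k : ℕ, m ≤ k → 0 < pk m δ k := by
    intro k hk
    have hkm : (m:ℝ) ≤ k := by exact_mod_cast hk
    have hx : (0:ℝ) < (k:ℝ) + δ := by linarith
    have h1 : 0 < Real.Gamma ((k:ℝ)+δ) := Real.Gamma_pos_of_pos hx
    have h2 : 0 < Real.Gamma ((k:ℝ)+3+δ+c) := Real.Gamma_pos_of_pos (by linarith)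
    have h2c : (0:ℝ) < 2 + c := by linarith
    unfold pk
    rw [← hc]
    exact div_pos (mul_pos (mul_pos h2c h1) hGm2) (mul_pos hGmd h2)
  refine ⟨hpos, ?_⟩
  set f : ℕ → ℝ := fun k => Real.Gamma ((k:ℝ)+δ) / Real.Gamma ((k:ℝ)+2+δ+c) with hf
  have key : ∀ k : ℕ, m ≤ k →
      pk m δ k = Real.Gamma ((m:ℝ)+2+δ+c) / Real.Gamma ((m:ℝ)+δ) * (f k - f (k+1)) := by
    intro k hk
    have hkm : (m:ℝ) ≤ k := by exact_mod_cast hk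
    have hx : (0:ℝ) < (k:ℝ) + δ := by linarith
    have hy : (0:ℝ) < (k:ℝ) + 2 + δ + c := by linarith
    have hGx : 0 < Real.Gamma ((k:ℝ)+δ) := Real.Gamma_pos_of_pos hx
    have hGy : 0 < Real.Gamma ((k:ℝ)+2+δ+c) := Real.Gamma_pos_of_pos hy
    have e1 : ((k:ℝ)+1)+δ = ((k:ℝ)+δ)+1 := by ring
    have e2 : ((k:ℝ)+1)+2+δ+c = ((k:ℝ)+2+δ+c)+1 := by ring
    have g1 : Real.Gamma (((k:ℝ)+1)+δ) = ((k:ℝ)+δ) * Real.Gamma ((k:ℝ)+δ) := by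
      rw [e1, Real.Gamma_add_one hx.ne']
    have g2 : Real.Gamma (((k:ℝ)+1)+2+δ+c)
        = ((k:ℝ)+2+δ+c) * Real.Gamma ((k:ℝ)+2+δ+c) := by
      rw [e2, Real.Gamma_add_one hy.ne']
    have e3 : (k:ℝ)+3+δ+c = ((k:ℝ)+1)+2+δ+c := by ring
    unfold pk
    rw [← hc, e3, g2]
    simp only [hf]
    push_cast
    rw [g1, g2]
    field_simp
    ring
  set C := Real.Gamma ((m:ℝ)+2+δ+c) / Real.Gamma ((m:ℝ)+δ) with hC
  set g : ℕ → ℝ := fun n => C * f (m + n) with hg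
  have hterm : ∀ n : ℕ, pk m δ (m + n) = g n - g (n + 1) := by
    intro n
    have := key (m + n) (Nat.le_add_right _ _)
    rw [this]
    simp only [hg]
    push_cast
    ring_nf
  have hg0 : g 0 = 1 := by
    simp only [hg, hf, hC, Nat.add_zero]
    field_simp
  have hgtend : Tendsto g atTop (nhds 0) := by
    have hCpos : 0 < C := div_pos hGm2 hGmd
    apply squeeze_zero' (g := fun n : ℕ => C / n)
    · filter_upwards with n
      have hx : (0:ℝ) < ((m+n:ℕ):ℝ) + δ := by push_cast; linarith [Nat.cast_nonneg (α := ℝ) n]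
      have : 0 < f (m + n) :=
        div_pos (Real.Gamma_pos_of_pos hx) (Real.Gamma_pos_of_pos (by linarith))
      positivity
    · filter_upwards [eventually_ge_atTop 1] with n hn
      have hn1 : (1:ℝ) ≤ n := by exact_mod_cast hn
      set x : ℝ := ((m+n:ℕ):ℝ) + δ with hxdef
      have hxn : (n:ℝ) ≤ x := by rw [hxdef]; push_cast; linarith
      have hx : (0:ℝ) < x := by linarith
      have hx2 : (2:ℝ) ≤ x + 1 := by linarith
      have harg : ((m+n:ℕ):ℝ) + 2 + δ + c = x + (2 + c) := by rw [hxdef]; ring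
      have hmono : Real.Gamma (x+1) ≤ Real.Gamma (x + (2+c)) := by
        rcases eq_or_lt_of_le (show x+1 ≤ x+(2+c) by linarith) with h | h
        · rw [h]
        · exact le_of_lt (Real.Gamma_strictMonoOn_Ici hx2 (by simp; linarith) h)
      have hG1 : Real.Gamma (x+1) = x * Real.Gamma x := Real.Gamma_add_one hx.ne'
      have hGx : 0 < Real.Gamma x := Real.Gamma_pos_of_pos hx
      have hfb : f (m+n) ≤ 1 / n := by
        simp only [hf, ← hxdef, harg]
        calc Real.Gamma x / Real.Gamma (x + (2+c))
            ≤ Real.Gamma x / Real.Gamma (x+1) := by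
              apply div_le_div_of_nonneg_left hGx.le _ hmono
              rw [hG1]; positivity
          _ = 1 / x := by rw [hG1]; field_simp
          _ ≤ 1 / n := by apply one_div_le_one_div_of_le (by linarith) hxn
      simp only [hg]
      calc C * f (m+n) ≤ C * (1/n) := by
            apply mul_le_mul_of_nonneg_left hfb hCpos.le
        _ = C / n := by ring
    · exact tendsto_const_div_atTop_nhds_zero_nat C
  have hnonneg : ∀ n : ℕ, 0 ≤ pk m δ (m + n) :=
    fun n => (hpos _ (Nat.le_add_right _ _)).le
  rw [hasSum_iff_tendsto_nat_of_nonneg hnonneg]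
  have : ∀ n : ℕ, ∑ i ∈ Finset.range n, pk m δ (m + i) = g 0 - g n := by
    intro n
    rw [← Finset.sum_range_sub' g n]
    exact Finset.sum_congr rfl fun i _ => hterm i
  simp only [this, hg0]
  simpa using tendsto_const_nhds.sub hgtend

end
end

section
/- Fix an integer m ≥ 1 and a real δ > −m, and let c(δ) := (2 + δ/m)·Γ(m+2+δ+δ/m)/Γ(m+δ), so that p_d = c(δ)·Γ(d+δ)/Γ(d+3+δ+δ/m) for d ≥ m. Then for every integer r > m: Σ_{d=m}^{r−1} p_d·b_d^{(r)} = c(δ)·(−1)^r·Γ(r+δ)/(r+2+δ+δ/m) · [ (−1)^m / ((r−m)!·Γ(m+2+δ+δ/m)) + (−1)^{r−1} / Γ(r+2+δ+δ/m) ]. -/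
set_option maxHeartbeats 1000000


open MeasureTheory Filter Finset

noncomputable section

lemma tele_sum (g : ℕ → ℝ) (a b : ℕ) (h : a ≤ b) :
    ∑ d ∈ Finset.Ico a b, (g d - g (d+1)) = g a - g b := by
  induction b, h using Nat.le_induction with
  | base => simp
  | succ b hb ih => rw [Finset.sum_Ico_succ_top (by omega), ih]; ring

/-- The telescoping evaluation of `∑_{d=m}^{r-1} p_d b_d^{(r)}`, with
`c(δ) = (2+δ/m) Γ(m+2+δ+δ/m)/Γ(m+δ)`. -/
theorem sum_pk_bcoef (m : ℕ) (hm : 1 ≤ m) (δ : ℝ) (hδ : -(m:ℝ) < δ)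
    (r : ℕ) (hr : m < r) :
    ∑ d ∈ Finset.Ico m r, pk m δ d * bcoef δ d r =
      ((2 + δ/m) * Real.Gamma ((m:ℝ)+2+δ+δ/m) / Real.Gamma ((m:ℝ)+δ)) *
        ((-1:ℝ)^r * Real.Gamma ((r:ℝ)+δ) / ((r:ℝ)+2+δ+δ/m)) *
        ((-1:ℝ)^m / ((Nat.factorial (r-m) : ℝ) * Real.Gamma ((m:ℝ)+2+δ+δ/m))
          + (-1:ℝ)^(r-1) / Real.Gamma ((r:ℝ)+2+δ+δ/m)) := by
  have hm0 : (0:ℝ) < m := by exact_mod_cast hm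
  have hδm : -1 < δ/m := by rw [lt_div_iff₀ hm0]; linarith
  have hmr : (m:ℝ) < r := by exact_mod_cast hr
  have hr2 : (0:ℝ) < (r:ℝ)+2+δ+δ/m := by linarith
  set g : ℕ → ℝ := fun d =>
    (-1:ℝ)^d / ((Nat.factorial (r-d) : ℝ) * Real.Gamma ((d:ℝ)+2+δ+δ/m)) with hg
  have hsum : ∑ d ∈ Finset.Ico m r, pk m δ d * bcoef δ d r
      = ∑ d ∈ Finset.Ico m r,
          (((2 + δ/m) * Real.Gamma ((m:ℝ)+2+δ+δ/m) / Real.Gamma ((m:ℝ)+δ)) *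
            ((-1:ℝ)^r * Real.Gamma ((r:ℝ)+δ) / ((r:ℝ)+2+δ+δ/m))) * (g d - g (d+1)) := by
    refine Finset.sum_congr rfl ?_
    intro d hd
    obtain ⟨hd1, hd2⟩ := Finset.mem_Ico.mp hd
    have hdm : (m:ℝ) ≤ d := by exact_mod_cast hd1
    have hΓdδ : Real.Gamma ((d:ℝ)+δ) ≠ 0 := ne_of_gt (Real.Gamma_pos_of_pos (by linarith))
    have hΓmδ : Real.Gamma ((m:ℝ)+δ) ≠ 0 := ne_of_gt (Real.Gamma_pos_of_pos (by linarith))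
    have hd2pos : (0:ℝ) < (d:ℝ)+2+δ+δ/m := by linarith
    have hΓd2 : Real.Gamma ((d:ℝ)+2+δ+δ/m) ≠ 0 :=
      ne_of_gt (Real.Gamma_pos_of_pos hd2pos)
    have hΓd3 : Real.Gamma ((d:ℝ)+3+δ+δ/m)
        = ((d:ℝ)+2+δ+δ/m) * Real.Gamma ((d:ℝ)+2+δ+δ/m) := by
      have h3 : (d:ℝ)+3+δ+δ/m = ((d:ℝ)+2+δ+δ/m)+1 := by ring
      rw [h3, Real.Gamma_add_one (ne_of_gt hd2pos)]
    have hfac : (Nat.factorial (r-d) : ℝ) = ((r-d : ℕ) : ℝ) * (Nat.factorial (r-(d+1)) : ℝ) := by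
      have h4 : r - d = (r - (d+1)) + 1 := by omega
      rw [h4, Nat.factorial_succ]
      push_cast
      ring
    have hsign : (-1:ℝ)^(r-d) = (-1)^r * (-1)^d := by
      rw [← pow_add]
      have h2 : r + d = (r - d) + 2*d := by omega
      rw [h2, pow_add, pow_mul]
      norm_num
    have hrd0 : (r:ℝ) - (d:ℝ) ≠ 0 := by
      have : (d:ℝ) < r := by exact_mod_cast hd2
      linarith
    have hfac2 : (Nat.factorial (r-(d+1)) : ℝ) ≠ 0 := by positivity
    simp only [hg, pk, bcoef, if_pos hd2.le, Nat.cast_add, Nat.cast_one]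
    have h31 : (d:ℝ)+1+2+δ+δ/m = (d:ℝ)+3+δ+δ/m := by ring
    rw [h31, hΓd3, hsign, hfac, pow_succ, Nat.cast_sub hd2.le]
    set x := δ/m with hx
    set GA := Real.Gamma ((d:ℝ)+δ) with hGA
    set GB := Real.Gamma ((m:ℝ)+δ) with hGB
    set GC := Real.Gamma ((m:ℝ)+2+δ+x) with hGC
    set GD := Real.Gamma ((d:ℝ)+2+δ+x) with hGD
    set GE := Real.Gamma ((r:ℝ)+δ) with hGE
    have hrd2 : ((r:ℝ)+2+δ+x) ≠ 0 := ne_of_gt hr2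
    have hdd2 : ((d:ℝ)+2+δ+x) ≠ 0 := ne_of_gt hd2pos
    field_simp
    ring
  rw [hsum, ← Finset.mul_sum, tele_sum g m r hr.le]
  have hgr : g r = (-1:ℝ)^r / Real.Gamma ((r:ℝ)+2+δ+δ/m) := by
    simp [hg, Nat.sub_self]
  have hs : (-1:ℝ)^(r-1) = -(-1:ℝ)^r := by
    have h : r = (r-1)+1 := by omega
    conv_rhs => rw [h]
    rw [pow_succ]
    ring
  rw [hgr, hs, hg]
  ring
end
end

section
/- Fix an integer m ≥ 1 and a real δ > −m. Then for every integer r ≥ m: b_m^{(r)} − ((r+δ)/(2m+δ))·Σ_{d=m}^{r} b_d^{(r)}·p_d = (−1)^{r−m}·(Γ(r+δ)/((r−m)!·Γ(m+δ)))·(r+2+δ−r/m)/(r+2+δ+δ/m). -/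
set_option maxHeartbeats 1000000

open MeasureTheory Filter Finset

noncomputable section

private lemma gamma_prod_aux (x : ℝ) : ∀ n : ℕ, 0 < x - n →
    Real.Gamma x = (∏ i ∈ Finset.range n, (x - 1 - i)) * Real.Gamma (x - n) := by
  intro n
  induction n with
  | zero => simp
  | succ n ih =>
    intro h
    have hc : ((n+1:ℕ):ℝ) = (n:ℝ) + 1 := by push_cast; ring
    rw [hc] at h
    have h1 : 0 < x - n := by linarith
    have h2 : x - (n:ℝ) - 1 ≠ 0 := by intro hh; nlinarith
    rw [ih h1, Finset.prod_range_succ]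
    have h3 : Real.Gamma (x - n) = (x - 1 - n) * Real.Gamma (x - ((n:ℝ)+1)) := by
      have := Real.Gamma_add_one h2
      rw [show x - (n:ℝ) - 1 + 1 = x - n by ring] at this
      rw [this]; ring_nf
    rw [h3, hc]; ring

private lemma tsum_aux (x : ℝ) : ∀ n : ℕ, (n:ℝ) < x →
    ∑ j ∈ Finset.range (n+1), (-1:ℝ)^j / ((Nat.factorial j : ℝ) * Real.Gamma (x - j))
    = (-1:ℝ)^n * (∏ i ∈ Finset.range n, (x - 2 - i)) / ((Nat.factorial n : ℝ) * Real.Gamma x) := by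
  intro n
  induction n with
  | zero => simp
  | succ n ih =>
    intro h
    have hc : ((n+1:ℕ):ℝ) = (n:ℝ) + 1 := by push_cast; ring
    rw [hc] at h
    have hn : (n:ℝ) < x := by linarith
    have hpos : 0 < x - ((n+1:ℕ):ℝ) := by rw [hc]; linarith
    have hG : Real.Gamma x = (∏ i ∈ Finset.range (n+1), (x - 1 - i)) * Real.Gamma (x - ((n+1:ℕ):ℝ)) :=
      gamma_prod_aux x (n+1) hpos
    have hQ : (∏ i ∈ Finset.range (n+1), (x - 1 - (i:ℝ))) = (x-1) * ∏ i ∈ Finset.range n, (x - 2 - i) := by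
      rw [Finset.prod_range_succ']
      have e : ∀ i : ℕ, x - 1 - ((i+1:ℕ):ℝ) = x - 2 - i := by intro i; push_cast; ring
      simp only [e, Nat.cast_zero]
      ring
    have hGx : Real.Gamma x ≠ 0 := by
      have : 0 < x := by rw [hc] at hpos; linarith
      exact (Real.Gamma_pos_of_pos this).ne'
    have hGn : Real.Gamma (x - ((n+1:ℕ):ℝ)) ≠ 0 := (Real.Gamma_pos_of_pos hpos).ne'
    have hQne : (x-1) * (∏ i ∈ Finset.range n, (x - 2 - (i:ℝ))) ≠ 0 := by
      intro hz
      rw [hG, hQ, hz, zero_mul] at hGx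
      exact hGx rfl
    have hx1 : (x-1) ≠ 0 := fun hz => hQne (by rw [hz, zero_mul])
    have hP : (∏ i ∈ Finset.range n, (x - 2 - (i:ℝ))) ≠ 0 := fun hz => hQne (by rw [hz, mul_zero])
    rw [Finset.sum_range_succ, ih hn, Finset.prod_range_succ]
    rw [hG, hQ]
    have hfn : ((Nat.factorial n : ℕ):ℝ) ≠ 0 := Nat.cast_ne_zero.mpr (Nat.factorial_ne_zero n)
    have hfn1 : ((Nat.factorial (n+1) : ℕ):ℝ) = ((n:ℝ)+1) * (Nat.factorial n : ℝ) := by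
      rw [Nat.factorial_succ]; push_cast; ring
    rw [hfn1, hc]
    have hn1 : (n:ℝ) + 1 ≠ 0 := by positivity
    rw [hc] at hGn
    field_simp [hfn, hGn, hx1, hP, hn1]
    ring

private lemma tsum_icc (x : ℝ) (m r : ℕ) (hmr : m ≤ r) (h : ((r-m:ℕ):ℝ) < x) :
    ∑ d ∈ Finset.Icc m r, (-1:ℝ)^(r-d) / ((Nat.factorial (r-d) : ℝ) * Real.Gamma (x - ((r-d:ℕ):ℝ)))
    = (-1:ℝ)^(r-m) * (∏ i ∈ Finset.range (r-m), (x - 2 - i)) /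
        ((Nat.factorial (r-m) : ℝ) * Real.Gamma x) := by
  rw [← tsum_aux x (r-m) h]
  rw [← Finset.Ico_add_one_right_eq_Icc, Finset.sum_Ico_eq_sum_range]
  have hn : r + 1 - m = (r - m) + 1 := by omega
  rw [hn]
  have hrefl := Finset.sum_range_reflect
    (fun j => (-1:ℝ)^j / ((Nat.factorial j : ℝ) * Real.Gamma (x - j))) (r-m+1)
  rw [← hrefl]
  apply Finset.sum_congr rfl
  intro j hj
  have hj' : j < r - m + 1 := Finset.mem_range.mp hj
  have e : r - (m + j) = r - m + 1 - 1 - j := by omega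
  simp only [e]

/-- Closed form for `b_m^{(r)} - ((r+δ)/(2m+δ)) ∑_{d=m}^{r} b_d^{(r)} p_d`. -/
theorem bcoef_minus_weighted_sum (m : ℕ) (hm : 1 ≤ m) (δ : ℝ) (hδ : -(m:ℝ) < δ)
    (r : ℕ) (hr : m ≤ r) :
    bcoef δ m r - (((r:ℝ)+δ)/(2*(m:ℝ)+δ)) * ∑ d ∈ Finset.Icc m r, bcoef δ d r * pk m δ d =
      (-1:ℝ)^(r-m) * (Real.Gamma ((r:ℝ)+δ) /
          ((Nat.factorial (r-m) : ℝ) * Real.Gamma ((m:ℝ)+δ))) *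
        (((r:ℝ)+2+δ-(r:ℝ)/m) / ((r:ℝ)+2+δ+δ/m)) := by
  have hm0 : 0 < (m:ℝ) := by exact_mod_cast hm
  have hmr : (m:ℝ) ≤ (r:ℝ) := by exact_mod_cast hr
  have hcδ : -1 < δ/m := by rw [lt_div_iff₀ hm0]; linarith
  have hmδ : 0 < (m:ℝ) + δ := by linarith
  have hrδ : 0 < (r:ℝ) + δ := by linarith
  have hm2 : 0 < (m:ℝ)+2+δ+δ/m := by linarith
  have hx2 : 0 < (r:ℝ)+2+δ+δ/m := by linarith
  have hcast : ((r-m:ℕ):ℝ) = (r:ℝ) - m := Nat.cast_sub hr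
  have hlt : ((r-m:ℕ):ℝ) < (r:ℝ)+3+δ+δ/m := by rw [hcast]; linarith
  -- nonvanishing Gammas
  have gmδ : Real.Gamma ((m:ℝ)+δ) ≠ 0 := (Real.Gamma_pos_of_pos hmδ).ne'
  have gm2 : Real.Gamma ((m:ℝ)+2+δ+δ/m) ≠ 0 := (Real.Gamma_pos_of_pos hm2).ne'
  have gx2 : Real.Gamma ((r:ℝ)+2+δ+δ/m) ≠ 0 := (Real.Gamma_pos_of_pos hx2).ne'
  -- step 1 : rewrite the sum
  have hsum : ∑ d ∈ Finset.Icc m r, bcoef δ d r * pk m δ d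
      = (Real.Gamma ((r:ℝ)+δ) * (2+δ/m) * Real.Gamma ((m:ℝ)+2+δ+δ/m) / Real.Gamma ((m:ℝ)+δ)) *
        ∑ d ∈ Finset.Icc m r, (-1:ℝ)^(r-d) /
          ((Nat.factorial (r-d) : ℝ) * Real.Gamma (((r:ℝ)+3+δ+δ/m) - ((r-d:ℕ):ℝ))) := by
    rw [Finset.mul_sum]
    apply Finset.sum_congr rfl
    intro d hd
    obtain ⟨hmd, hdr⟩ := Finset.mem_Icc.mp hd
    have hmd' : (m:ℝ) ≤ (d:ℝ) := by exact_mod_cast hmd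
    have hcd : ((r-d:ℕ):ℝ) = (r:ℝ) - d := Nat.cast_sub hdr
    have hxd : ((r:ℝ)+3+δ+δ/m) - ((r-d:ℕ):ℝ) = (d:ℝ)+3+δ+δ/m := by rw [hcd]; ring
    have hdδ : 0 < (d:ℝ) + δ := by linarith
    have hd3 : 0 < (d:ℝ)+3+δ+δ/m := by linarith
    have gdδ : Real.Gamma ((d:ℝ)+δ) ≠ 0 := (Real.Gamma_pos_of_pos hdδ).ne'
    have gd3 : Real.Gamma ((d:ℝ)+3+δ+δ/m) ≠ 0 := (Real.Gamma_pos_of_pos hd3).ne'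
    have hf : ((Nat.factorial (r-d) : ℕ):ℝ) ≠ 0 := Nat.cast_ne_zero.mpr (Nat.factorial_ne_zero _)
    rw [bcoef, if_pos hdr, pk, hxd]
    generalize Real.Gamma ((d:ℝ)+δ) = G1 at gdδ ⊢
    generalize Real.Gamma ((d:ℝ)+3+δ+δ/m) = G2 at gd3 ⊢
    generalize Real.Gamma ((m:ℝ)+δ) = G3 at gmδ ⊢
    generalize Real.Gamma ((m:ℝ)+2+δ+δ/m) = G4
    generalize Real.Gamma ((r:ℝ)+δ) = G5
    generalize ((Nat.factorial (r-d) : ℕ):ℝ) = F at hf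
    field_simp
  rw [hsum, tsum_icc ((r:ℝ)+3+δ+δ/m) m r hr hlt]
  -- step 3 : evaluate the product
  have hprod : (∏ i ∈ Finset.range (r-m), (((r:ℝ)+3+δ+δ/m) - 2 - i))
      = Real.Gamma ((r:ℝ)+2+δ+δ/m) / Real.Gamma ((m:ℝ)+2+δ+δ/m) := by
    have hpos : 0 < ((r:ℝ)+2+δ+δ/m) - ((r-m:ℕ):ℝ) := by rw [hcast]; linarith
    have hGp := gamma_prod_aux ((r:ℝ)+2+δ+δ/m) (r-m) hpos
    have e1 : ((r:ℝ)+2+δ+δ/m) - ((r-m:ℕ):ℝ) = (m:ℝ)+2+δ+δ/m := by rw [hcast]; ring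
    rw [e1] at hGp
    have e2 : (∏ i ∈ Finset.range (r-m), (((r:ℝ)+2+δ+δ/m) - 1 - i))
        = ∏ i ∈ Finset.range (r-m), (((r:ℝ)+3+δ+δ/m) - 2 - i) := by
      apply Finset.prod_congr rfl; intro i _; ring
    rw [e2] at hGp
    rw [hGp]
    exact (mul_div_cancel_right₀ _ gm2).symm
  rw [hprod]
  -- step 4 : split Gamma (r+3+δ+δ/m)
  have hsplit : Real.Gamma ((r:ℝ)+3+δ+δ/m) = ((r:ℝ)+2+δ+δ/m) * Real.Gamma ((r:ℝ)+2+δ+δ/m) := by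
    have := Real.Gamma_add_one hx2.ne'
    rw [show (r:ℝ)+2+δ+δ/m + 1 = (r:ℝ)+3+δ+δ/m by ring] at this
    rw [this]
  rw [hsplit, bcoef, if_pos hr]
  have hf : ((Nat.factorial (r-m) : ℕ):ℝ) ≠ 0 := Nat.cast_ne_zero.mpr (Nat.factorial_ne_zero _)
  have h2m : (0:ℝ) < 2*(m:ℝ)+δ := by linarith
  generalize Real.Gamma ((m:ℝ)+δ) = G3 at gmδ ⊢
  generalize hB : Real.Gamma ((m:ℝ)+2+δ+δ/m) = G4 at gm2 ⊢
  generalize Real.Gamma ((r:ℝ)+2+δ+δ/m) = Gx at gx2 ⊢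
  generalize Real.Gamma ((r:ℝ)+δ) = G5
  generalize ((Nat.factorial (r-m) : ℕ):ℝ) = F at hf
  have hmx : (m:ℝ) * ((r:ℝ)+2+δ+δ/m) = (r:ℝ)*(m:ℝ) + δ + δ*(m:ℝ) + (m:ℝ)*2 := by
    field_simp; ring
  have hZ : (r:ℝ)*(m:ℝ) + δ + δ*(m:ℝ) + (m:ℝ)*2 ≠ 0 := by
    rw [← hmx]; exact mul_ne_zero hm0.ne' hx2.ne'
  have e3 : G5 * (2 + δ/(m:ℝ)) * G4 / G3 * ((-1:ℝ)^(r-m) * (Gx/G4) / (F * (((r:ℝ)+2+δ+δ/m) * Gx)))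
      = (-1:ℝ)^(r-m) * (G5/(F*G3)) * ((2+δ/(m:ℝ)) / ((r:ℝ)+2+δ+δ/m)) := by
    field_simp [hx2.ne', hZ]
  rw [e3]
  have hbr : 1 - (((r:ℝ)+δ)/(2*(m:ℝ)+δ)) * ((2+δ/(m:ℝ)) / ((r:ℝ)+2+δ+δ/m))
      = ((r:ℝ)+2+δ-(r:ℝ)/m) / ((r:ℝ)+2+δ+δ/m) := by
    field_simp [hx2.ne', h2m.ne', hm0.ne', hZ]
    have hZ2 : ((r:ℝ) * (m:ℝ) + δ + δ * (m:ℝ) + (m:ℝ) * 2 : ℝ) ≠ 0 := hZ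
    linear_combination (-1 : ℝ) * mul_inv_cancel₀ hZ2
  calc (-1:ℝ)^(r-m) * G5 / (F * G3) -
      ((r:ℝ)+δ) / (2*(m:ℝ)+δ) * ((-1:ℝ)^(r-m) * (G5/(F*G3)) * ((2+δ/(m:ℝ)) / ((r:ℝ)+2+δ+δ/m)))
      = (-1:ℝ)^(r-m) * (G5/(F*G3)) *
          (1 - (((r:ℝ)+δ)/(2*(m:ℝ)+δ)) * ((2+δ/(m:ℝ)) / ((r:ℝ)+2+δ+δ/m))) := by ring
    _ = (-1:ℝ)^(r-m) * (G5/(F*G3)) * (((r:ℝ)+2+δ-(r:ℝ)/m) / ((r:ℝ)+2+δ+δ/m)) := by rw [hbr]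

end
end
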